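/- arXiv:2010.11527 — 4 statements merged into one kernel-verified Lean document; each statement's English description precedes it below -/
import Mathlib

section
/- For every binary relation φ : ℕ → ℕ → Prop and every natural number x, if for every w there exists y < x such that φ y z holds for all z < w, then there exists y < x such that φ y z holds for all z. -/
theorem stmt_3 (φ : ℕ → ℕ → Prop) (x : ℕ)
    (h : ∀ w, ∃ y < x, ∀ z < w, φ y z) :
    ∃ y < x, ∀ z, φ y z := by
  by_contra hc
  push_neg at hc
  choose f hf using hc
  set g : ℕ → ℕ := fun y => if hy : y < x then f y hy + 1 else 0 with hg
  obtain ⟨y, hy, hφ⟩ := h ((Finset.range x).sup g)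
  refine hf y hy (hφ _ ?_)
  calc f y hy < g y := by simp [hg, hy]
    _ ≤ _ := Finset.le_sup (Finset.mem_range.mpr hy)
end

section
/- Let φ : ℕ → ℕ → Prop. Suppose the double negation shift holds for the paired family, i.e. (∀ z : ℕ, ¬¬φ (Nat.unpair z).1 (Nat.unpair z).2) → ¬¬(∀ z : ℕ, φ (Nat.unpair z).1 (Nat.unpair z).2). Then (∀ x, ¬¬(∀ y, φ x y)) → ¬¬(∀ x, ∀ y, φ x y). -/
theorem stmt_5 (φ : ℕ → ℕ → Prop)
    (h : (∀ z : ℕ, ¬¬ φ (Nat.unpair z).1 (Nat.unpair z).2) →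
      ¬¬ (∀ z : ℕ, φ (Nat.unpair z).1 (Nat.unpair z).2)) :
    (∀ x, ¬¬ (∀ y, φ x y)) → ¬¬ (∀ x, ∀ y, φ x y) := by
  intro h1 hc
  have h2 : ∀ z : ℕ, ¬¬ φ (Nat.unpair z).1 (Nat.unpair z).2 := by
    intro z hn
    exact h1 (Nat.unpair z).1 (fun hall => hn (hall _))
  exact h h2 (fun hall => hc (fun x y => by
    have := hall (Nat.pair x y)
    simpa using this))
end

section
/- Let Γ be a set of propositions. If ∀ p ∈ Γ, ¬p ∨ ¬¬p, then for every p ∈ Γ and every proposition q, ¬(p ∧ q) → ¬p ∨ ¬q. -/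
theorem stmt_7 (Γ : Set Prop) (h : ∀ p ∈ Γ, ¬p ∨ ¬¬p) :
    ∀ p ∈ Γ, ∀ q : Prop, ¬(p ∧ q) → ¬p ∨ ¬q := by
  intro p hp q hpq
  rcases h p hp with hnp | hnnp
  · exact Or.inl hnp
  · exact Or.inr fun hq => hnnp fun hp' => hpq ⟨hp', hq⟩
end

section
/- Let Γ be a set of propositions that is closed under disjunction (if p ∈ Γ and q ∈ Γ then (p ∨ q) ∈ Γ). If ∀ p ∈ Γ, ¬¬p → p, then for all p ∈ Γ and q ∈ Γ, ¬(¬p ∧ ¬q) → ¬¬p ∨ ¬¬q. -/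
theorem stmt_15 (Γ : Set Prop)
    (hclosed : ∀ p ∈ Γ, ∀ q ∈ Γ, (p ∨ q) ∈ Γ)
    (h : ∀ p ∈ Γ, ¬¬p → p) :
    ∀ p ∈ Γ, ∀ q ∈ Γ, ¬(¬p ∧ ¬q) → ¬¬p ∨ ¬¬q := by
  intro p hp q hq hnn
  have hpq : p ∨ q := h _ (hclosed p hp q hq) (fun hn => hnn ⟨fun hp' => hn (Or.inl hp'), fun hq' => hn (Or.inr hq')⟩)
  rcases hpq with hp' | hq'
  · exact Or.inl fun hn => hn hp'
  · exact Or.inr fun hn => hn hq'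
end
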